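/- arXiv:2202.04377 — 8 statements merged into one kernel-verified Lean document; each statement's English description precedes it below -/
import Mathlib

section
/- Let Σ be a type, let k and m be positive integers, let δ ∈ (0,1) and ε > 0 be real numbers, and let 𝒞 be a finite set of vectors Fin m → Σ such that any two distinct elements of 𝒞 agree in at most (1−δ)·m coordinates. Consider the bipartite graph with left part A = Fin k × 𝒞 and right parts B_j = {j} × (Fin k → Σ) for j ∈ Fin m, where a left vertex (i, x) is adjacent to a right vertex (j, b) if and only if x(j) = b(i). Then for every X ⊆ Fin k × 𝒞 and every choice of right vertices b : Fin m → (Fin k → Σ) (one from each B_j), if the number of indices j ∈ Fin m such that |{(i, x) ∈ X : x(j) = (b j)(i)}| ≥ k + 1 is at least ε·m, then |X| > √(2ε/(1−δ)). -/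
/-- Soundness of the threshold graph built from an error correcting code.
`𝒞` is a set of codewords in `Fin m → σ` with pairwise agreement at most `(1-δ)·m`.
Left vertices are pairs `(i, x) ∈ Fin k × 𝒞`, a right vertex of `B_j` is `(j, b)` with
`b : Fin k → σ`, and `(i,x)` is adjacent to `(j,b)` iff `x j = b i`. If `X` is a set of
left vertices and `b : Fin m → (Fin k → σ)` chooses one right vertex from each part, and
for at least `ε·m` indices `j` the vertex `(j, b j)` has at least `k+1` neighbors in `X`,
then `|X| > √(2ε/(1-δ))`. -/
theorem threshold_graph_soundness {σ : Type*} {k m : ℕ} (hk : 0 < k) (hm : 0 < m)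
    {δ ε : ℝ} (hδ : δ ∈ Set.Ioo (0 : ℝ) 1) (hε : 0 < ε)
    (𝒞 : Finset (Fin m → σ))
    (hdist : ∀ x ∈ 𝒞, ∀ x' ∈ 𝒞, x ≠ x' →
      ({j : Fin m | x j = x' j}.ncard : ℝ) ≤ (1 - δ) * m)
    (X : Finset (Fin k × (Fin m → σ))) (hX : ∀ p ∈ X, p.2 ∈ 𝒞)
    (b : Fin m → (Fin k → σ))
    (hthr : ε * m ≤
      (({j : Fin m |
        k + 1 ≤ {p : Fin k × (Fin m → σ) | p ∈ X ∧ p.2 j = b j p.1}.ncard}).ncard : ℝ)) :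
    Real.sqrt (2 * ε / (1 - δ)) < (X.card : ℝ) := by
  classical
  obtain ⟨hδ0, hδ1⟩ := hδ
  have h1δ : (0:ℝ) < 1 - δ := by linarith
  have hcardp : ∀ j : Fin m, {p : Fin k × (Fin m → σ) | p ∈ X ∧ p.2 j = b j p.1}.ncard
      = (X.filter fun p => p.2 j = b j p.1).card := by
    intro j
    rw [show {p : Fin k × (Fin m → σ) | p ∈ X ∧ p.2 j = b j p.1}
        = ↑(X.filter fun p => p.2 j = b j p.1) by ext p; simp [Finset.mem_filter],
      Set.ncard_coe_finset]
  set J : Finset (Fin m) := Finset.univ.filter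
      (fun j => k + 1 ≤ (X.filter fun p => p.2 j = b j p.1).card) with hJdef
  have hJcard : ({j : Fin m |
        k + 1 ≤ {p : Fin k × (Fin m → σ) | p ∈ X ∧ p.2 j = b j p.1}.ncard}).ncard = J.card := by
    rw [show {j : Fin m |
        k + 1 ≤ {p : Fin k × (Fin m → σ) | p ∈ X ∧ p.2 j = b j p.1}.ncard} = ↑J by
      ext j; simp [hJdef, hcardp j], Set.ncard_coe_finset]
  rw [hJcard] at hthr
  -- pigeonhole: each heavy j yields a colliding pair
  have hpair : ∀ j ∈ J, ∃ pq : (Fin k × (Fin m → σ)) × (Fin k × (Fin m → σ)),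
      pq ∈ X.offDiag ∧ pq.1.2 ≠ pq.2.2 ∧ pq.1.2 j = pq.2.2 j := by
    intro j hj
    rw [hJdef, Finset.mem_filter] at hj
    obtain ⟨p, hp, q, hq, hpq, hfst⟩ :=
      Finset.exists_ne_map_eq_of_card_lt_of_maps_to
        (s := X.filter fun p => p.2 j = b j p.1) (t := (Finset.univ : Finset (Fin k)))
        (f := fun p => p.1)
        (by simpa using Nat.lt_of_lt_of_le (Nat.lt_succ_self k) hj.2)
        (fun p _ => Finset.mem_univ p.1)
    rw [Finset.mem_filter] at hp hq
    have hsnd : p.2 ≠ q.2 := fun h => hpq (Prod.ext hfst h)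
    exact ⟨(p, q), Finset.mem_offDiag.2 ⟨hp.1, hq.1, hpq⟩, hsnd,
      by rw [hp.2, hq.2, hfst]⟩
  -- the incidence set S
  set S : Finset (((Fin k × (Fin m → σ)) × (Fin k × (Fin m → σ))) × Fin m) :=
    (X.offDiag ×ˢ Finset.univ).filter
      (fun t => t.1.1.2 ≠ t.1.2.2 ∧ t.1.1.2 t.2 = t.1.2.2 t.2) with hSdef
  -- two disjoint injections from J into S
  have hf : ∀ j : {j // j ∈ J}, ((hpair j.1 j.2).choose, j.1) ∈ S ∧
      (((hpair j.1 j.2).choose.2, (hpair j.1 j.2).choose.1), j.1) ∈ S := by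
    intro j
    obtain ⟨h1, h2, h3⟩ := (hpair j.1 j.2).choose_spec
    rw [Finset.mem_offDiag] at h1
    constructor <;> rw [hSdef, Finset.mem_filter] <;>
      refine ⟨Finset.mem_product.2 ⟨Finset.mem_offDiag.2 ?_, Finset.mem_univ _⟩, ?_, ?_⟩
    · exact ⟨h1.1, h1.2.1, h1.2.2⟩
    · exact h2
    · exact h3
    · exact ⟨h1.2.1, h1.1, h1.2.2.symm⟩
    · exact h2.symm
    · exact h3.symm
  set F : {j // j ∈ J} → ((Fin k × (Fin m → σ)) × (Fin k × (Fin m → σ))) × Fin m :=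
    fun j => ((hpair j.1 j.2).choose, j.1) with hFdef
  set G : {j // j ∈ J} → ((Fin k × (Fin m → σ)) × (Fin k × (Fin m → σ))) × Fin m :=
    fun j => (((hpair j.1 j.2).choose.2, (hpair j.1 j.2).choose.1), j.1) with hGdef
  have hFinj : Function.Injective F := fun a b h => Subtype.ext (congrArg Prod.snd h)
  have hGinj : Function.Injective G := fun a b h => Subtype.ext (congrArg Prod.snd h)
  have hdisj : Disjoint (J.attach.image F) (J.attach.image G) := by
    rw [Finset.disjoint_left]
    rintro t htF htG
    obtain ⟨a, -, ha⟩ := Finset.mem_image.1 htF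
    obtain ⟨c, -, hc⟩ := Finset.mem_image.1 htG
    have hac : a = c := Subtype.ext (congrArg Prod.snd (ha.trans hc.symm))
    subst hac
    have heq : (hpair a.1 a.2).choose
        = ((hpair a.1 a.2).choose.2, (hpair a.1 a.2).choose.1) :=
      congrArg Prod.fst (ha.trans hc.symm)
    exact (hpair a.1 a.2).choose_spec.2.1 (congrArg (fun r => r.1.2) heq)
  have hcount : 2 * J.card ≤ S.card := by
    have h1 : (J.attach.image F) ∪ (J.attach.image G) ⊆ S := by
      intro t ht
      rcases Finset.mem_union.1 ht with h | h <;> obtain ⟨a, -, ha⟩ := Finset.mem_image.1 h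
        <;> rw [← ha]
      · exact (hf a).1
      · exact (hf a).2
    calc 2 * J.card = (J.attach.image F).card + (J.attach.image G).card := by
          rw [Finset.card_image_of_injective _ hFinj,
            Finset.card_image_of_injective _ hGinj, Finset.card_attach, two_mul]
      _ = ((J.attach.image F) ∪ (J.attach.image G)).card :=
          (Finset.card_union_of_disjoint hdisj).symm
      _ ≤ S.card := Finset.card_le_card h1
  -- upper bound on S.card
  have hbound : ∀ pq ∈ X.offDiag,
      (((S.filter fun t => t.1 = pq).card : ℕ) : ℝ) ≤ (1 - δ) * m := by
    intro pq hpq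
    by_cases hne : pq.1.2 = pq.2.2
    · have hemp : (S.filter fun t => t.1 = pq) = ∅ := by
        rw [Finset.eq_empty_iff_forall_notMem]
        intro t ht
        rw [Finset.mem_filter, hSdef, Finset.mem_filter] at ht
        exact ht.1.2.1 (ht.2 ▸ hne)
      rw [hemp]
      simpa using mul_nonneg h1δ.le (Nat.cast_nonneg m)
    · have hmem := Finset.mem_offDiag.1 hpq
      have hle : (S.filter fun t => t.1 = pq).card ≤
          (Finset.univ.filter fun j : Fin m => pq.1.2 j = pq.2.2 j).card := by
        apply Finset.card_le_card_of_injOn (fun t => t.2)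
        · intro t ht
          rw [Finset.mem_coe, Finset.mem_filter, hSdef, Finset.mem_filter] at ht
          rw [Finset.mem_coe, Finset.mem_filter]
          exact ⟨Finset.mem_univ _, ht.2 ▸ ht.1.2.2⟩
        · intro t1 h1 t2 h2 hsnd
          rw [Finset.mem_coe, Finset.mem_filter] at h1 h2
          exact Prod.ext (h1.2.trans h2.2.symm) hsnd
      have hnc : ({j : Fin m | pq.1.2 j = pq.2.2 j}.ncard : ℝ) ≤ (1 - δ) * m :=
        hdist _ (hX _ hmem.1) _ (hX _ hmem.2.1) hne
      rw [show {j : Fin m | pq.1.2 j = pq.2.2 j}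
          = ↑(Finset.univ.filter fun j : Fin m => pq.1.2 j = pq.2.2 j) by
        ext j; simp, Set.ncard_coe_finset] at hnc
      exact le_trans (by exact_mod_cast hle) hnc
  have hfib : (S.card : ℝ) ≤ (X.offDiag.card : ℝ) * ((1 - δ) * m) := by
    have hsum : S.card = ∑ pq ∈ X.offDiag, (S.filter fun t => t.1 = pq).card := by
      apply Finset.card_eq_sum_card_fiberwise
      intro t ht
      rw [Finset.mem_coe, hSdef, Finset.mem_filter, Finset.mem_product] at ht
      exact ht.1.1
    rw [hsum]
    push_cast
    calc (∑ pq ∈ X.offDiag, ((S.filter fun t => t.1 = pq).card : ℝ))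
        ≤ ∑ _pq ∈ X.offDiag, ((1 - δ) * (m:ℝ)) := Finset.sum_le_sum hbound
      _ = (X.offDiag.card : ℝ) * ((1 - δ) * m) := by
          rw [Finset.sum_const, nsmul_eq_mul]
  have hod : (X.offDiag.card : ℝ) ≤ (X.card : ℝ) * ((X.card : ℝ) - 1) := by
    rw [Finset.offDiag_card]
    rcases Nat.eq_zero_or_pos X.card with h0 | h0
    · simp [h0]
    · rw [Nat.cast_sub (Nat.le_mul_of_pos_left _ h0)]
      push_cast
      nlinarith [(Nat.one_le_cast (α := ℝ)).mpr h0]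
  have hm' : (0:ℝ) < m := by exact_mod_cast hm
  have hchain : 2 * ε * m ≤ (X.card : ℝ) * ((X.card : ℝ) - 1) * ((1 - δ) * m) := by
    have h2 : (2 * J.card : ℝ) ≤ (S.card : ℝ) := by exact_mod_cast hcount
    have h3 : (S.card : ℝ) ≤ (X.card : ℝ) * ((X.card : ℝ) - 1) * ((1 - δ) * m) := by
      refine le_trans hfib ?_
      have := mul_nonneg h1δ.le (le_of_lt hm')
      nlinarith [hod]
    nlinarith [hthr]
  have hkey : 2 * ε / (1 - δ) ≤ (X.card : ℝ) * ((X.card : ℝ) - 1) := by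
    rw [div_le_iff₀ h1δ]
    nlinarith [hchain]
  have hn1 : (1:ℝ) ≤ (X.card : ℝ) := by
    by_contra h
    push_neg at h
    have h0 : X.card = 0 := by exact_mod_cast Nat.lt_one_iff.1 (by exact_mod_cast h)
    rw [h0] at hkey
    simp at hkey
    nlinarith [div_pos (by linarith : (0:ℝ) < 2*ε) h1δ]
  have hpos : (0:ℝ) < (X.card : ℝ) := by linarith
  rw [show Real.sqrt (2 * ε / (1 - δ)) < (X.card:ℝ) ↔ 2 * ε / (1 - δ) < (X.card:ℝ)^2 from
    Real.sqrt_lt' hpos]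
  nlinarith [hkey]
end

section
/- With the composed SetCover instance Γ' as in the context: suppose s₁, …, s_k ∈ S are such that {s₁, …, s_k} covers U in Γ (i.e. for every u ∈ U there is ℓ ∈ Fin k with (s_ℓ, u) ∈ E), let a_ℓ = (ℓ, s_ℓ) ∈ A_ℓ for each ℓ ∈ Fin k, and suppose b̂₁ ∈ B₁, …, b̂_m ∈ B_m are such that (a_ℓ, b̂_i) ∈ E_T for every i ∈ Fin m and every ℓ ∈ Fin k. Then the set {a₁, …, a_k} ∪ {b̂₁, …, b̂_m} ⊆ S' covers every element of U' in Γ'. (Under the weights w(a) = m/k for a ∈ A and w(b) = 1 for b ∈ B, this solution has total weight 2m.) -/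
/-- An element of the universe `U'` of the composed SetCover instance `Γ'`:
an index `i ∈ Fin m` together with `u⃗ : Fin c → U` and `b⃗ : Fin c → B₀`
(the vector `b⃗` taking values in the part `B_i = {i} × B₀`). -/
abbrev ComposedElt (U B₀ : Type*) (m c : ℕ) := Fin m × (Fin c → U) × (Fin c → B₀)

/-- A left vertex `a ∈ A = Fin k × S` covers `(i, u⃗, b⃗) ∈ U'` iff there is `j ∈ Fin c`
with `(a, (i, b⃗ j)) ∈ E_T` and `(s(a), u⃗ j) ∈ E`. -/
def coversA {S U B₀ : Type*} {k m c : ℕ}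
    (E : S → U → Prop) (E_T : Fin k × S → Fin m × B₀ → Prop)
    (a : Fin k × S) (elt : ComposedElt U B₀ m c) : Prop :=
  ∃ j : Fin c, E_T a (elt.1, elt.2.2 j) ∧ E a.2 (elt.2.1 j)

/-- A right vertex `b ∈ B = Fin m × B₀` covers `(i, u⃗, b⃗) ∈ U'` iff `b ∈ B_i`
and `b` differs from `(i, b⃗ j)` for every `j ∈ Fin c`. -/
def coversB {U B₀ : Type*} {m c : ℕ}
    (b : Fin m × B₀) (elt : ComposedElt U B₀ m c) : Prop :=
  b.1 = elt.1 ∧ ∀ j : Fin c, b.2 ≠ elt.2.2 j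

/-- **completeness of the composition.** If `s₁, …, s_k` cover `U` in `Γ`,
`a_ℓ = (ℓ, s_ℓ)`, and `b̂_i ∈ B_i` is a common neighbor of all the `a_ℓ` in the threshold
graph for every `i`, then `{a₁,…,a_k} ∪ {b̂₁,…,b̂_m}` covers every element of `U'` in `Γ'`. -/
theorem composed_completeness {S U B₀ : Type*} [Fintype S] [Fintype U] [Fintype B₀]
    [Nonempty B₀] {k m c : ℕ} (hk : 0 < k) (hm : 0 < m) (hc : 0 < c)
    (E : S → U → Prop) (E_T : Fin k × S → Fin m × B₀ → Prop)
    (s : Fin k → S) (hcov : ∀ u : U, ∃ ℓ : Fin k, E (s ℓ) u)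
    (bhat : Fin m → B₀)
    (hbhat : ∀ (i : Fin m) (ℓ : Fin k), E_T (ℓ, s ℓ) (i, bhat i)) :
    ∀ elt : ComposedElt U B₀ m c,
      (∃ ℓ : Fin k, coversA E E_T (ℓ, s ℓ) elt) ∨
      (∃ i : Fin m, coversB (i, bhat i) elt) := by
  rintro ⟨i, uv, bv⟩
  by_cases h : ∀ j : Fin c, bhat i ≠ bv j
  · exact Or.inr ⟨i, rfl, h⟩
  · push_neg at h
    obtain ⟨j, hj⟩ := h
    obtain ⟨ℓ, hℓ⟩ := hcov (uv j)
    exact Or.inl ⟨ℓ, j, by simpa [hj] using hbhat i ℓ, hℓ⟩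
end

section
/- With the composed SetCover instance Γ' as in the context: suppose that no subset of S of size at most k covers U in Γ. Let X ⊆ A and Y ⊆ B be such that every element of U' is covered by some vertex of X ∪ Y in Γ'. Then for every i ∈ Fin m, at least one of the following holds: (1) |Y ∩ B_i| ≥ c + 1; or (2) there exists b ∈ B_i such that |{a ∈ X : (a, b) ∈ E_T}| ≥ k + 1. -/
/-- **soundness of the composition, local form.** If no subset of `S` of
size at most `k` covers `U` in `Γ`, and `X ⊆ A`, `Y ⊆ B` together cover all of `U'` in
`Γ'`, then for every `i ∈ Fin m` either `Y` contains at least `c+1` vertices of `B_i`,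
or some vertex `b ∈ B_i` has at least `k+1` neighbors in `X` in the threshold graph. -/
theorem composed_soundness_local {S U B₀ : Type*} [Fintype S] [Fintype U] [Fintype B₀]
    [Nonempty B₀] {k m c : ℕ} (hk : 0 < k) (hm : 0 < m) (hc : 0 < c)
    (E : S → U → Prop) (E_T : Fin k × S → Fin m × B₀ → Prop)
    (hard : ¬ ∃ C : Finset S, C.card ≤ k ∧ ∀ u : U, ∃ s ∈ C, E s u)
    (X : Finset (Fin k × S)) (Y : Finset (Fin m × B₀))
    (hcov : ∀ elt : ComposedElt U B₀ m c,
      (∃ a ∈ X, coversA E E_T a elt) ∨ (∃ b ∈ Y, coversB b elt)) :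
    ∀ i : Fin m,
      c + 1 ≤ {b : Fin m × B₀ | b ∈ Y ∧ b.1 = i}.ncard ∨
      ∃ b₀ : B₀, k + 1 ≤ {a : Fin k × S | a ∈ X ∧ E_T a (i, b₀)}.ncard := by
  intro i
  by_contra hcon
  push_neg at hcon
  obtain ⟨hY, hX⟩ := hcon
  classical
  push_neg at hard
  set T : Set B₀ := {b₀ | (i, b₀) ∈ Y} with hT
  have hTfin : T.Finite := Set.toFinite _
  have himg : {b : Fin m × B₀ | b ∈ Y ∧ b.1 = i} = (fun b₀ => (i, b₀)) '' T := by
    ext b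
    constructor
    · rintro ⟨hb, hbi⟩
      exact ⟨b.2, by simpa [hT, ← hbi] using hb, by rw [← hbi]⟩
    · rintro ⟨b₀, hb₀, rfl⟩
      exact ⟨hb₀, rfl⟩
  have hinj : Function.Injective (fun b₀ : B₀ => (i, b₀)) := fun x y h => by
    simpa using h
  have hTcard : T.ncard ≤ c := by
    have h1 := Set.ncard_image_of_injective T hinj
    rw [himg, h1] at hY
    omega
  -- enumerate T via a function Fin c → B₀
  set L : List B₀ := hTfin.toFinset.toList with hL
  have hLlen : L.length ≤ c := by
    have : L.length = T.ncard := by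
      rw [hL, Finset.length_toList, Set.ncard_eq_toFinset_card T hTfin]
    omega
  set f : Fin c → B₀ := fun j => L.getD j (Classical.arbitrary B₀) with hf
  have hfsurj : ∀ b₀ ∈ T, ∃ j : Fin c, f j = b₀ := by
    intro b₀ hb₀
    have hmem : b₀ ∈ L := by
      rw [hL, Finset.mem_toList, Set.Finite.mem_toFinset]
      exact hb₀
    obtain ⟨idx, hidx⟩ := List.get_of_mem hmem
    refine ⟨⟨idx.1, lt_of_lt_of_le idx.2 hLlen⟩, ?_⟩
    simp only [hf]
    rw [List.getD_eq_getElem _ _ idx.2]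
    simpa using hidx
  -- neighbor sets and uncovered universe elements
  have hNcard : ∀ j : Fin c, {a : Fin k × S | a ∈ X ∧ E_T a (i, f j)}.ncard ≤ k := by
    intro j
    have := hX (f j)
    omega
  have hu : ∀ j : Fin c, ∃ u : U,
      ∀ a : Fin k × S, a ∈ X → E_T a (i, f j) → ¬ E a.2 u := by
    intro j
    set N : Set (Fin k × S) := {a | a ∈ X ∧ E_T a (i, f j)} with hN
    have hNfin : N.Finite := Set.toFinite _
    set C : Finset S := hNfin.toFinset.image Prod.snd with hC
    have hCcard : C.card ≤ k := by
      calc C.card ≤ hNfin.toFinset.card := Finset.card_image_le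
        _ = N.ncard := (Set.ncard_eq_toFinset_card N hNfin).symm
        _ ≤ k := hNcard j
    obtain ⟨u, hu⟩ := hard C hCcard
    refine ⟨u, fun a haX haT => ?_⟩
    exact hu a.2 (by
      rw [hC]
      exact Finset.mem_image_of_mem _ (hNfin.mem_toFinset.mpr ⟨haX, haT⟩))
  choose u huprop using hu
  -- the uncovered element
  have := hcov (i, u, f)
  rcases this with ⟨a, haX, j, haT, haE⟩ | ⟨b, hbY, hb1, hb2⟩
  · exact huprop j a haX haT haE
  · have hbT : b.2 ∈ T := by
      have hb1' : b.1 = i := hb1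
      have hbe : (i, b.2) = b := by rw [← hb1']
      simpa [hT, hbe] using hbY
    obtain ⟨j, hj⟩ := hfsurj b.2 hbT
    exact hb2 j hj.symm
end

section
/- With the composed SetCover instance Γ' as in the context, let ε ∈ (0,1) and h > 0 be real numbers, and assume the threshold graph T satisfies the soundness property: for every X ⊆ A and every b : Fin m → B₀, if the number of indices i ∈ Fin m with |{a ∈ X : (a, (i, b(i))) ∈ E_T}| ≥ k + 1 is at least ε·m, then |X| > h. Suppose further that no subset of S of size at most k covers U in Γ. Then for every X ⊆ A and Y ⊆ B such that X ∪ Y covers every element of U' in Γ', the total weight satisfies (m/k)·|X| + |Y| > min(m·h/k, (1−ε)·m·c). -/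
/-- **soundness of the composition, weighted form.** Assume the threshold
graph satisfies the strong soundness property with parameters `ε ∈ (0,1)` and `h > 0`,
and that no subset of `S` of size at most `k` covers `U` in `Γ`. Then every solution
`X ∪ Y` (with `X ⊆ A` of weight `m/k` each, `Y ⊆ B` of weight `1` each) of `Γ'` has
total weight greater than `min(m·h/k, (1-ε)·m·c)`. -/
theorem composed_soundness_weighted {S U B₀ : Type*} [Fintype S] [Fintype U] [Fintype B₀]
    [Nonempty B₀] {k m c : ℕ} (hk : 0 < k) (hm : 0 < m) (hc : 0 < c)
    (E : S → U → Prop) (E_T : Fin k × S → Fin m × B₀ → Prop)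
    {ε h : ℝ} (hε : ε ∈ Set.Ioo (0 : ℝ) 1) (hh : 0 < h)
    (hsound : ∀ (X : Finset (Fin k × S)) (b : Fin m → B₀),
      ε * m ≤
        (({i : Fin m |
          k + 1 ≤ {a : Fin k × S | a ∈ X ∧ E_T a (i, b i)}.ncard}).ncard : ℝ) →
      h < (X.card : ℝ))
    (hard : ¬ ∃ C : Finset S, C.card ≤ k ∧ ∀ u : U, ∃ s ∈ C, E s u) :
    ∀ (X : Finset (Fin k × S)) (Y : Finset (Fin m × B₀)),
      (∀ elt : ComposedElt U B₀ m c,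
        (∃ a ∈ X, coversA E E_T a elt) ∨ (∃ b ∈ Y, coversB b elt)) →
      min ((m : ℝ) * h / k) ((1 - ε) * m * c) <
        (m : ℝ) / k * (X.card : ℝ) + (Y.card : ℝ) := by
  classical
  intro X Y hcov
  obtain ⟨hε0, hε1⟩ := hε
  have hk' : (0:ℝ) < k := by exact_mod_cast hk
  have hm' : (0:ℝ) < m := by exact_mod_cast hm
  have hc' : (0:ℝ) < c := by exact_mod_cast hc
  by_cases hX : h < (X.card : ℝ)
  · refine lt_of_le_of_lt (min_le_left _ _) ?_
    have h1 : (m:ℝ) * h / k = (m:ℝ)/k * h := by ring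
    have h2 : (m:ℝ)/k * h < (m:ℝ)/k * X.card :=
      mul_lt_mul_of_pos_left hX (div_pos hm' hk')
    have h3 : (0:ℝ) ≤ Y.card := Nat.cast_nonneg _
    linarith
  · push_neg at hX
    set Xcov : Fin m → B₀ → Set (Fin k × S) :=
      fun i b₀ => {a | a ∈ X ∧ E_T a (i, b₀)} with hXcov
    set b : Fin m → B₀ := fun i =>
      if hne : ∃ b₀, k + 1 ≤ (Xcov i b₀).ncard then hne.choose
      else Classical.arbitrary B₀ with hb
    have hlt : (({i : Fin m | k + 1 ≤ (Xcov i (b i)).ncard}).ncard : ℝ) < ε * m := by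
      by_contra hge
      push_neg at hge
      exact absurd (hsound X b hge) (not_lt.mpr hX)
    set GoodF : Finset (Fin m) :=
      Finset.univ.filter (fun i => ∀ b₀, (Xcov i b₀).ncard ≤ k) with hGoodF
    have hcompl : (↑(GoodFᶜ) : Set (Fin m)) ⊆ {i : Fin m | k + 1 ≤ (Xcov i (b i)).ncard} := by
      intro i hi
      simp only [Finset.coe_compl, Set.mem_compl_iff, Finset.mem_coe, hGoodF,
        Finset.mem_filter, Finset.mem_univ, true_and, not_forall, not_le] at hi
      obtain ⟨b₀, hb₀⟩ := hi
      have hne : ∃ b₀, k + 1 ≤ (Xcov i b₀).ncard := ⟨b₀, hb₀⟩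
      have : b i = hne.choose := by rw [hb]; exact dif_pos hne
      simpa [this] using hne.choose_spec
    have hcomplcard : ((GoodFᶜ).card : ℝ) < ε * m := by
      refine lt_of_le_of_lt ?_ hlt
      have := Set.ncard_le_ncard hcompl (Set.toFinite _)
      rw [Set.ncard_coe_finset] at this
      exact_mod_cast this
    have hGoodcard : (1 - ε) * m < (GoodF.card : ℝ) := by
      have := Finset.card_add_card_compl GoodF
      have hm2 : (GoodF.card : ℝ) + (GoodFᶜ).card = m := by
        exact_mod_cast congrArg (Nat.cast : ℕ → ℝ) (by simpa [Fintype.card_fin] using this)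
      nlinarith
    -- key claim: each good fiber of Y has at least c elements
    have key : ∀ i ∈ GoodF, c ≤ (Y.filter (fun p => p.1 = i)).card := by
      intro i hi
      rw [hGoodF, Finset.mem_filter] at hi
      have higood := hi.2
      by_contra hltc
      push_neg at hltc
      set Fib := Y.filter (fun p => p.1 = i) with hFib
      set l := (Fib.image Prod.snd).toList with hl
      have hlen : l.length ≤ c := by
        have h1 : (Fib.image Prod.snd).card ≤ Fib.card := Finset.card_image_le
        have : l.length = (Fib.image Prod.snd).card := Finset.length_toList _
        omega
      set bvec : Fin c → B₀ := fun j => l.getD j (Classical.arbitrary B₀) with hbvec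
      have hbv : ∀ p ∈ Fib, ∃ j : Fin c, bvec j = p.2 := by
        intro p hp
        have hmem : p.2 ∈ l := by
          rw [hl, Finset.mem_toList]
          exact Finset.mem_image_of_mem _ hp
        obtain ⟨n, hn, hget⟩ := List.getElem_of_mem hmem
        refine ⟨⟨n, lt_of_lt_of_le hn hlen⟩, ?_⟩
        simp [hbvec, List.getD_eq_getElem?_getD, List.getElem?_eq_getElem hn, hget]
      have hXsmall : ∀ j : Fin c, ∃ u : U, ∀ a ∈ X, E_T a (i, bvec j) → ¬ E a.2 u := by
        intro j
        push_neg at hard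
        set C : Finset S := (X.filter (fun a => E_T a (i, bvec j))).image Prod.snd with hC
        have hCcard : C.card ≤ k := by
          refine le_trans Finset.card_image_le ?_
          have heq : (X.filter (fun a => E_T a (i, bvec j))).card
              = (Xcov i (bvec j)).ncard := by
            rw [← Set.ncard_coe_finset]
            congr 1
            ext a
            simp [hXcov]
          rw [heq]; exact higood _
        obtain ⟨u, hu⟩ := hard C hCcard
        refine ⟨u, fun a ha hET hE => ?_⟩
        exact hu a.2 (Finset.mem_image_of_mem _ (Finset.mem_filter.mpr ⟨ha, hET⟩)) hE
      choose uvec huvec using hXsmall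
      obtain ⟨a, haX, j, hET, hE⟩ | ⟨p, hpY, hp1, hp2⟩ := hcov (i, uvec, bvec)
      · exact huvec j a haX hET hE
      · have hpFib : p ∈ Fib := Finset.mem_filter.mpr ⟨hpY, hp1⟩
        obtain ⟨j, hj⟩ := hbv p hpFib
        exact hp2 j hj.symm
    have hYcard : GoodF.card * c ≤ Y.card := by
      have hfib : Y.card = ∑ i : Fin m, (Y.filter (fun p => p.1 = i)).card :=
        Finset.card_eq_sum_card_fiberwise (fun x _ => Finset.mem_univ x.1)
      calc GoodF.card * c = ∑ _i ∈ GoodF, c := by rw [Finset.sum_const, smul_eq_mul]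
        _ ≤ ∑ i ∈ GoodF, (Y.filter (fun p => p.1 = i)).card := Finset.sum_le_sum key
        _ ≤ ∑ i : Fin m, (Y.filter (fun p => p.1 = i)).card :=
            Finset.sum_le_sum_of_subset (Finset.subset_univ _)
        _ = Y.card := hfib.symm
    refine lt_of_le_of_lt (min_le_right _ _) ?_
    have h1 : (1 - ε) * m * c < (GoodF.card : ℝ) * c :=
      mul_lt_mul_of_pos_right hGoodcard hc'
    have h2 : ((GoodF.card : ℝ)) * c ≤ (Y.card : ℝ) := by exact_mod_cast hYcard
    have h3 : (0:ℝ) ≤ (m:ℝ)/k * X.card :=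
      mul_nonneg (le_of_lt (div_pos hm' hk')) (Nat.cast_nonneg _)
    linarith
end

section
/- With the graph G as in the context: if there exist s₁, …, s_k ∈ S such that {s₁, …, s_k} covers U (i.e. for every u ∈ U there is ℓ ∈ Fin k with (s_ℓ, u) ∈ E), then G contains a clique of size k + h. -/
/-- The graph `G` from the reduction of SetCover (with universe `U = Fin h × Fin L`) to
Clique. Vertices: `V = Fin k × S` and `W = Fin h × (Fin L → Fin k)`. Two `V`-vertices
are adjacent iff their first components differ; two `W`-vertices are adjacent iff their
first components differ; `(i, s) ∈ V` and `(j, g) ∈ W` are adjacent iff for every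
`ℓ ∈ Fin L`, `g ℓ = i` implies `(s, (j, ℓ)) ∈ E`. -/
def setCoverCliqueGraph {S : Type*} (k h L : ℕ) (E : S → Fin h × Fin L → Prop) :
    SimpleGraph ((Fin k × S) ⊕ (Fin h × (Fin L → Fin k))) where
  Adj v w :=
    match v, w with
    | Sum.inl (i, _), Sum.inl (i', _) => i ≠ i'
    | Sum.inr (j, _), Sum.inr (j', _) => j ≠ j'
    | Sum.inl (i, s), Sum.inr (j, g) => ∀ ℓ : Fin L, g ℓ = i → E s (j, ℓ)
    | Sum.inr (j, g), Sum.inl (i, s) => ∀ ℓ : Fin L, g ℓ = i → E s (j, ℓ)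
  symm := by
    constructor
    rintro (⟨i, s⟩ | ⟨j, g⟩) (⟨i', s'⟩ | ⟨j', g'⟩) hadj
    · exact fun hEq => hadj hEq.symm
    · exact hadj
    · exact hadj
    · exact fun hEq => hadj hEq.symm
  loopless := by
    constructor
    rintro (⟨i, s⟩ | ⟨j, g⟩) hadj
    · exact hadj rfl
    · exact hadj rfl

/-- If `s₁, …, s_k ∈ S` cover the universe `U = Fin h × Fin L`, then the
graph `G` contains a clique of size `k + h`. -/
theorem setCoverCliqueGraph_completeness {S : Type*} [Fintype S]
    {k h L : ℕ} (hk : 0 < k) (hh : 0 < h) (hL : 0 < L)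
    (E : S → Fin h × Fin L → Prop)
    (s : Fin k → S) (hcov : ∀ u : Fin h × Fin L, ∃ ℓ : Fin k, E (s ℓ) u) :
    ∃ t : Finset ((Fin k × S) ⊕ (Fin h × (Fin L → Fin k))),
      (setCoverCliqueGraph k h L E).IsNClique (k + h) t := by
  
  classical
  set g : Fin h → Fin L → Fin k := fun j ℓ => (hcov (j, ℓ)).choose with hg
  have hgE : ∀ j ℓ, E (s (g j ℓ)) (j, ℓ) := fun j ℓ => (hcov (j, ℓ)).choose_spec
  refine ⟨(Finset.univ.image fun i : Fin k => Sum.inl (i, s i)) ∪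
      (Finset.univ.image fun j : Fin h => Sum.inr (j, g j)), ?_, ?_⟩
  · rintro x hx y hy hxy
    simp only [Finset.coe_union, Set.mem_union, Finset.coe_image, Set.mem_image, Finset.mem_coe, Finset.mem_univ, true_and, Finset.coe_univ, Set.mem_univ, Set.image_univ, Set.mem_range] at hx
    simp only [Finset.coe_union, Set.mem_union, Finset.coe_image, Set.mem_image, Finset.mem_coe, Finset.mem_univ, true_and, Finset.coe_univ, Set.mem_univ, Set.image_univ, Set.mem_range] at hy
    obtain ⟨i, rfl⟩ | ⟨j, rfl⟩ := hx <;> obtain ⟨i', rfl⟩ | ⟨j', rfl⟩ := hy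
    · exact fun hEq => hxy (by subst hEq; rfl)
    · exact fun ℓ hℓ => hℓ ▸ hgE j' ℓ
    · exact fun ℓ hℓ => hℓ ▸ hgE j ℓ
    · exact fun hEq => hxy (by subst hEq; rfl)
  · rw [Finset.card_union_of_disjoint, Finset.card_image_of_injective,
      Finset.card_image_of_injective, Finset.card_univ, Finset.card_univ,
      Fintype.card_fin, Fintype.card_fin]
    · intro a b hab
      simp only [Sum.inr.injEq, Prod.mk.injEq] at hab
      exact hab.1
    · intro a b hab
      simp only [Sum.inl.injEq, Prod.mk.injEq] at hab
      exact hab.1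
    · rw [Finset.disjoint_left]
      rintro x hx hy
      simp only [Finset.mem_image, Finset.mem_univ, true_and] at hx hy
      obtain ⟨i, rfl⟩ := hx
      obtain ⟨j, h⟩ := hy
      exact nomatch h
end

section
/- With the graph G as in the context: if G contains a clique of size k + h, then there exists a function v : Fin k → S such that the set {v(1), …, v(k)} covers U, i.e. for every u ∈ U there is i ∈ Fin k with (v(i), u) ∈ E; in particular U has a cover of size at most k. -/
/-- If the graph `G` contains a clique of size `k + h`, then there is a
function `v : Fin k → S` whose values cover the universe `U = Fin h × Fin L`; in
particular `U` has a cover of size at most `k`. -/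
theorem setCoverCliqueGraph_soundness {S : Type*} [Fintype S]
    {k h L : ℕ} (hk : 0 < k) (hh : 0 < h) (hL : 0 < L)
    (E : S → Fin h × Fin L → Prop)
    (t : Finset ((Fin k × S) ⊕ (Fin h × (Fin L → Fin k))))
    (ht : (setCoverCliqueGraph k h L E).IsNClique (k + h) t) :
    (∃ v : Fin k → S, ∀ u : Fin h × Fin L, ∃ i : Fin k, E (v i) u) ∧
    (∃ C : Finset S, C.card ≤ k ∧ ∀ u : Fin h × Fin L, ∃ s ∈ C, E s u) := by

  classical
  set f : ((Fin k × S) ⊕ (Fin h × (Fin L → Fin k))) → (Fin k ⊕ Fin h) :=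
    Sum.map Prod.fst Prod.fst with hf
  have hinj : Set.InjOn f (t : Set _) := by
    intro x hx y hy hxy
    by_contra hne
    have hadj := ht.1 hx hy hne
    match x, y with
    | Sum.inl (i, s), Sum.inl (i', s') =>
      exact hadj (Sum.inl.inj hxy)
    | Sum.inr (j, g), Sum.inr (j', g') =>
      exact hadj (Sum.inr.inj hxy)
    | Sum.inl _, Sum.inr _ => simp [hf] at hxy
    | Sum.inr _, Sum.inl _ => simp [hf] at hxy
  have hcard : (t.image f).card = Fintype.card (Fin k ⊕ Fin h) := by
    rw [Finset.card_image_of_injOn hinj, ht.2]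
    simp
  have huniv : t.image f = Finset.univ := Finset.eq_univ_of_card _ hcard
  have hsurj : ∀ z : Fin k ⊕ Fin h, ∃ x ∈ t, f x = z := by
    intro z
    have : z ∈ t.image f := huniv ▸ Finset.mem_univ z
    simpa using Finset.mem_image.mp this
  have hV : ∀ i : Fin k, ∃ s : S, Sum.inl (i, s) ∈ t := by
    intro i
    obtain ⟨x, hx, hfx⟩ := hsurj (Sum.inl i)
    match x with
    | Sum.inl (i', s) =>
      obtain rfl : i' = i := Sum.inl.inj hfx
      exact ⟨s, hx⟩
    | Sum.inr _ => simp [hf] at hfx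
  have hW : ∀ j : Fin h, ∃ g : Fin L → Fin k, Sum.inr (j, g) ∈ t := by
    intro j
    obtain ⟨x, hx, hfx⟩ := hsurj (Sum.inr j)
    match x with
    | Sum.inr (j', g) =>
      obtain rfl : j' = j := Sum.inr.inj hfx
      exact ⟨g, hx⟩
    | Sum.inl _ => simp [hf] at hfx
  choose v hv using hV
  choose w hw using hW
  have hcover : ∀ u : Fin h × Fin L, ∃ i : Fin k, E (v i) u := by
    rintro ⟨j, ℓ⟩
    set i := w j ℓ with hi
    have hadj := ht.1 (hv i) (hw j) (by simp)
    exact ⟨i, hadj ℓ hi.symm⟩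
  refine ⟨⟨v, hcover⟩, Finset.univ.image v, ?_, ?_⟩
  · exact (Finset.card_image_le).trans (by simp)
  · intro u
    obtain ⟨i, hi⟩ := hcover u
    exact ⟨v i, Finset.mem_image_of_mem v (Finset.mem_univ i), hi⟩
end

section
/- Let W be a finite set, let k be a positive integer, let S₁, …, S_k be finite sets with W ⊆ S₁ ∪ … ∪ S_k, and let T be a natural number with T ≤ k. Then there exists a subset J ⊆ Fin k with |J| = k − T such that the number of elements of W not covered by ⋃_{i ∈ J} S_i is at most (T/k)·|W|, i.e. |W \ ⋃_{i ∈ J} S_i| ≤ (T/k)·|W|. -/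
/-- **per-round averaging step of the modified greedy algorithm.**
If the finite set `W` is covered by the sets `S₁, …, S_k` and `T ≤ k`, then some
`k - T` of the sets leave at most a `T/k`-fraction of `W` uncovered. -/
theorem greedy_round {α : Type*} [DecidableEq α] (W : Finset α)
    {k : ℕ} (hk : 0 < k) (S : Fin k → Finset α)
    (hcov : ∀ w ∈ W, ∃ i : Fin k, w ∈ S i)
    (T : ℕ) (hT : T ≤ k) :
    ∃ J : Finset (Fin k), J.card = k - T ∧
      ((W \ J.biUnion S).card : ℝ) ≤ (T : ℝ) / (k : ℝ) * (W.card : ℝ) := by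
  classical
  set f : α → Fin k := fun x => if h : ∃ i, x ∈ S i then h.choose else ⟨0, hk⟩ with hf
  have hfS : ∀ x ∈ W, x ∈ S (f x) := by
    intro x hx
    have h : ∃ i, x ∈ S i := hcov x hx
    simp only [hf, dif_pos h]
    exact h.choose_spec
  set w : Fin k → ℝ := fun i => ((W.filter fun x => f x = i).card : ℝ) with hw
  have hwnn : ∀ i, 0 ≤ w i := fun i => Nat.cast_nonneg _
  have htot : ∑ i, w i = (W.card : ℝ) := by
    have := Finset.card_eq_sum_card_fiberwise (f := f) (s := W) (t := Finset.univ)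
      (fun x _ => Finset.mem_univ (f x))
    rw [this]
    push_cast
    rfl
  have hk' : (0 : ℝ) < (k : ℝ) := by exact_mod_cast hk
  -- key averaging claim
  have key : ∀ t : ℕ, t ≤ k → ∃ R : Finset (Fin k), R.card = k - t ∧
      ((k - t : ℕ) : ℝ) / (k : ℝ) * (W.card : ℝ) ≤ ∑ i ∈ R, w i := by
    intro t
    induction t with
    | zero =>
      intro _
      refine ⟨Finset.univ, by simp, ?_⟩
      rw [htot]
      simp
      rw [div_mul_eq_mul_div, mul_comm, mul_div_assoc, div_self (ne_of_gt hk'), mul_one]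
    | succ t ih =>
      intro hlt
      obtain ⟨R, hcard, hsum⟩ := ih (Nat.le_of_succ_le hlt)
      have hRpos : 0 < R.card := by omega
      have hRne : R.Nonempty := Finset.card_pos.mp hRpos
      obtain ⟨i0, hi0, hmin⟩ := Finset.exists_min_image R w hRne
      refine ⟨R.erase i0, by rw [Finset.card_erase_of_mem hi0, hcard]; omega, ?_⟩
      have hnsum : R.card • w i0 ≤ ∑ i ∈ R, w i :=
        Finset.card_nsmul_le_sum R w (w i0) hmin
    -- turn into real facts
      have hnsum' : (R.card : ℝ) * w i0 ≤ ∑ i ∈ R, w i := by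
        simpa [nsmul_eq_mul] using hnsum
      have herase : ∑ i ∈ R.erase i0, w i = (∑ i ∈ R, w i) - w i0 := by
        rw [← Finset.add_sum_erase R w hi0]; ring
      rw [herase]
      have hn : (R.card : ℝ) = ((k - t : ℕ) : ℝ) := by exact_mod_cast hcard
      have hcast1 : ((k - (t + 1) : ℕ) : ℝ) = ((k - t : ℕ) : ℝ) - 1 := by
        have : k - (t + 1) + 1 = k - t := by omega
        have := congrArg (Nat.cast : ℕ → ℝ) this
        push_cast at this
        linarith
      rw [hcast1]
      set A := ∑ i ∈ R, w i
      set n : ℝ := ((k - t : ℕ) : ℝ)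
      have hn1 : (1 : ℝ) ≤ n := by
        have h : 1 ≤ k - t := by omega
        show (1 : ℝ) ≤ ((k - t : ℕ) : ℝ)
        exact_mod_cast h
      have hWnn : (0 : ℝ) ≤ (W.card : ℝ) := Nat.cast_nonneg _
      -- from n * w i0 ≤ A and n/k * W ≤ A, k>0, n ≥ 1 deduce (n-1)/k * W ≤ A - w i0
      rw [hn] at hnsum'
      have hA : n / (k : ℝ) * (W.card : ℝ) ≤ A := hsum
      have hwi0 : w i0 ≤ A / n := by
        rw [le_div_iff₀ (by linarith : (0:ℝ) < n)]
        linarith [hnsum']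
      have h1 : A - w i0 ≥ A - A / n := by linarith
      have h2 : A - A / n = A * (n - 1) / n := by
        field_simp
      have h3 : (n - 1) / (k : ℝ) * (W.card : ℝ) ≤ A * (n - 1) / n := by
        rw [div_mul_eq_mul_div, div_le_div_iff₀ hk' (by linarith : (0:ℝ) < n)]
        have := mul_le_mul_of_nonneg_right hA (by linarith : (0:ℝ) ≤ n - 1)
        calc (n - 1) * (W.card : ℝ) * n = (n / (k:ℝ) * (W.card:ℝ)) * (n-1) * (k:ℝ) := by
              field_simp
          _ ≤ A * (n - 1) * (k : ℝ) := by
              apply mul_le_mul_of_nonneg_right _ (le_of_lt hk')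
              exact this
      linarith
  obtain ⟨J, hJcard, hJsum⟩ := key T hT
  refine ⟨J, hJcard, ?_⟩
  -- uncovered elements have f x ∉ J
  have hsub : W \ J.biUnion S ⊆ W.filter fun x => f x ∉ J := by
    intro x hx
    rw [Finset.mem_sdiff] at hx
    rw [Finset.mem_filter]
    refine ⟨hx.1, fun hfJ => hx.2 ?_⟩
    exact Finset.mem_biUnion.mpr ⟨f x, hfJ, hfS x hx.1⟩
  have hcard1 : ((W \ J.biUnion S).card : ℝ) ≤ ((W.filter fun x => f x ∉ J).card : ℝ) := by
    exact_mod_cast Finset.card_le_card hsub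
  have hfib : ((W.filter fun x => f x ∉ J).card : ℝ) ≤ ∑ i ∈ Finset.univ \ J, w i := by
    have := Finset.card_eq_sum_card_fiberwise (f := f) (s := W.filter fun x => f x ∉ J)
      (t := Finset.univ \ J) (fun x hx => by
        rw [Finset.mem_coe, Finset.mem_filter] at hx
        simp [hx.2])
    rw [this]
    push_cast
    apply Finset.sum_le_sum
    intro i _
    have : ((W.filter fun x => f x ∉ J).filter fun x => f x = i) ⊆ W.filter fun x => f x = i := by
      intro x hx
      rw [Finset.mem_filter] at hx ⊢
      exact ⟨(Finset.mem_filter.mp hx.1).1, hx.2⟩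
    simp only [hw]
    exact Nat.cast_le.mpr (Finset.card_le_card this)
  have hsplit : ∑ i ∈ Finset.univ \ J, w i = (W.card : ℝ) - ∑ i ∈ J, w i := by
    rw [← htot, Finset.sum_sdiff_eq_sub (Finset.subset_univ J)]
  have hcastJ : ((k - T : ℕ) : ℝ) = (k : ℝ) - (T : ℝ) := by
    rw [Nat.cast_sub hT]
  rw [hcastJ] at hJsum
  have : ((k : ℝ) - T) / k * (W.card : ℝ) = (W.card : ℝ) - (T : ℝ) / k * (W.card : ℝ) := by
    field_simp
  rw [this] at hJsum
  linarith
end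

section
/- Let U be a finite set and let 𝒮 be a family of subsets of U. Suppose there exist k sets in 𝒮 whose union is U, and let T be an integer with 1 ≤ T < k. Then for every natural number r there exists a subfamily 𝒮' ⊆ 𝒮 with |𝒮'| ≤ r·(k − T) such that the number of elements of U not covered by ⋃ 𝒮' is at most (T/k)^r · |U|. -/
/-- One greedy step: some set in `𝒯` covers at least a `1/|𝒯|` fraction of `W`. -/
lemma greedy_step {α : Type*} [DecidableEq α] (𝒯 : Finset (Finset α)) (W : Finset α)
    (hW : W ⊆ 𝒯.biUnion id) (hne : 𝒯.Nonempty) :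
    ∃ t ∈ 𝒯, W.card ≤ 𝒯.card * (W ∩ t).card := by
  have h1 : W.card ≤ ∑ t ∈ 𝒯, (W ∩ t).card := by
    have hsub : W ⊆ 𝒯.biUnion (fun t => W ∩ t) := by
      intro w hw
      obtain ⟨t, ht, hwt⟩ := Finset.mem_biUnion.mp (hW hw)
      exact Finset.mem_biUnion.mpr ⟨t, ht, Finset.mem_inter.mpr ⟨hw, hwt⟩⟩
    calc W.card ≤ (𝒯.biUnion (fun t => W ∩ t)).card := Finset.card_le_card hsub
      _ ≤ ∑ t ∈ 𝒯, (W ∩ t).card := Finset.card_biUnion_le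
  by_contra h
  push_neg at h
  have h2 : ∑ t ∈ 𝒯, 𝒯.card * (W ∩ t).card < ∑ _t ∈ 𝒯, W.card :=
    Finset.sum_lt_sum_of_nonempty hne h
  rw [Finset.sum_const, smul_eq_mul, ← Finset.mul_sum] at h2
  have h3 : ∑ t ∈ 𝒯, (W ∩ t).card < W.card :=
    lt_of_mul_lt_mul_left h2 (Nat.zero_le _)
  omega

/-- Iterating the greedy step `j` times: there are `j` sets of `𝒯` leaving at most
a `(|𝒯|-j)/|𝒯|` fraction of `W` uncovered. -/
lemma greedy_rounds {α : Type*} [DecidableEq α] :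
    ∀ (j : ℕ) (𝒯 : Finset (Finset α)) (W : Finset α), j ≤ 𝒯.card →
    W ⊆ 𝒯.biUnion id →
    ∃ 𝒜 ⊆ 𝒯, 𝒜.card ≤ j ∧
      𝒯.card * (W \ 𝒜.biUnion id).card ≤ (𝒯.card - j) * W.card := by
  intro j
  induction j with
  | zero =>
    intro 𝒯 W _ _
    exact ⟨∅, Finset.empty_subset _, by simp, by simp⟩
  | succ j ih =>
    intro 𝒯 W hj hW
    have hne : 𝒯.Nonempty := Finset.card_pos.mp (by omega)
    obtain ⟨t, ht, hcnt⟩ := greedy_step 𝒯 W hW hne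
    have herase : (𝒯.erase t).card = 𝒯.card - 1 := Finset.card_erase_of_mem ht
    have hW' : W \ t ⊆ (𝒯.erase t).biUnion id := by
      intro w hw
      obtain ⟨hw1, hw2⟩ := Finset.mem_sdiff.mp hw
      obtain ⟨s, hs, hws⟩ := Finset.mem_biUnion.mp (hW hw1)
      refine Finset.mem_biUnion.mpr ⟨s, Finset.mem_erase.mpr ⟨?_, hs⟩, hws⟩
      rintro rfl; exact hw2 hws
    obtain ⟨𝒜', h𝒜'sub, h𝒜'card, h𝒜'⟩ := ih (𝒯.erase t) (W \ t) (by omega) hW'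
    rw [herase] at h𝒜'
    refine ⟨insert t 𝒜', ?_, ?_, ?_⟩
    · intro s hs
      rcases Finset.mem_insert.mp hs with rfl | hs
      · exact ht
      · exact Finset.erase_subset _ _ (h𝒜'sub hs)
    · calc (insert t 𝒜').card ≤ 𝒜'.card + 1 := Finset.card_insert_le _ _
        _ ≤ j + 1 := by omega
    · set m := 𝒯.card with hm
      have hbi : (insert t 𝒜').biUnion id = t ∪ 𝒜'.biUnion id := by
        rw [Finset.biUnion_insert]; rfl
      have hset : W \ (insert t 𝒜').biUnion id = (W \ t) \ 𝒜'.biUnion id := by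
        rw [hbi]; exact (sdiff_sdiff W t (𝒜'.biUnion id)).symm
      rw [hset]
      set X := ((W \ t) \ 𝒜'.biUnion id).card with hX
      set Y := (W \ t).card with hY
      have hXY : X ≤ Y := Finset.card_le_card Finset.sdiff_subset
      have hsplit : (W ∩ t).card + (W \ t).card = W.card :=
        Finset.card_inter_add_card_sdiff W t
      -- m * Y + W.card ≤ m * W.card
      have h2 : m * Y + W.card ≤ m * W.card := by
        have : m * (W ∩ t).card + m * Y = m * W.card := by
          rw [← Nat.mul_add, hY, hsplit]
        omega
      rcases Nat.lt_or_ge m 2 with h1 | h1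
      · -- m = 1, j = 0
        have hm1 : m = 1 := by omega
        have hj0 : j = 0 := by omega
        have hY0 : Y = 0 := by
          rw [hm1] at h2; omega
        rw [hm1, hj0]
        omega
      · -- 2 ≤ m : cancel the factor (m-1)
        have key : (m - 1) * (m * X) ≤ (m - 1) * ((m - (j + 1)) * W.card) := by
          have step1 : (m - 1) * (m * X) = m * ((m - 1) * X) := by ring
          have step2 : m * ((m - 1) * X) ≤ m * ((m - 1 - j) * Y) :=
            Nat.mul_le_mul_left _ h𝒜'
          have step3 : m * ((m - 1 - j) * Y) = (m - 1 - j) * (m * Y) := by ring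
          have step4 : (m - 1 - j) * (m * Y) ≤ (m - 1 - j) * ((m - 1) * W.card) := by
            apply Nat.mul_le_mul_left
            have : (m - 1) * W.card = m * W.card - W.card := by
              rw [Nat.sub_mul, Nat.one_mul]
            omega
          have step5 : (m - 1 - j) * ((m - 1) * W.card)
              = (m - 1) * ((m - (j + 1)) * W.card) := by
            have : m - 1 - j = m - (j + 1) := by omega
            rw [this]; ring
          omega
        exact Nat.le_of_mul_le_mul_left key (by omega)

/-- **iterated greedy guarantee.** Let `𝒮` be a family of subsets of a
finite set `U` containing `k` sets whose union is `U`, and let `1 ≤ T < k`. Then for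
every `r` there is a subfamily `𝒮' ⊆ 𝒮` of at most `r·(k - T)` sets leaving at most a
`(T/k)^r`-fraction of `U` uncovered. -/
theorem greedy_iterated {α : Type*} [DecidableEq α] (U : Finset α)
    (𝒮 : Finset (Finset α)) (h𝒮 : ∀ s ∈ 𝒮, s ⊆ U)
    {k : ℕ} (hcov : ∃ 𝒯 ⊆ 𝒮, 𝒯.card = k ∧ 𝒯.biUnion id = U)
    {T : ℕ} (hT1 : 1 ≤ T) (hTk : T < k) :
    ∀ r : ℕ, ∃ 𝒮' ⊆ 𝒮, 𝒮'.card ≤ r * (k - T) ∧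
      ((U \ 𝒮'.biUnion id).card : ℝ) ≤ ((T : ℝ) / (k : ℝ)) ^ r * (U.card : ℝ) := by
  intro r
  induction r with
  | zero =>
    exact ⟨∅, Finset.empty_subset _, by simp, by simp⟩
  | succ r ih =>
    obtain ⟨𝒮', hsub, hcard, hbound⟩ := ih
    obtain ⟨𝒯, h𝒯sub, h𝒯card, h𝒯cov⟩ := hcov
    set W := U \ 𝒮'.biUnion id with hWdef
    have hWU : W ⊆ 𝒯.biUnion id := by rw [h𝒯cov]; exact Finset.sdiff_subset
    obtain ⟨𝒜, h𝒜sub, h𝒜card, h𝒜⟩ := greedy_rounds (k - T) 𝒯 W (by omega) hWU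
    rw [h𝒯card] at h𝒜
    have hkT : k - (k - T) = T := by omega
    rw [hkT] at h𝒜
    refine ⟨𝒮' ∪ 𝒜, Finset.union_subset hsub (h𝒜sub.trans h𝒯sub), ?_, ?_⟩
    · calc (𝒮' ∪ 𝒜).card ≤ 𝒮'.card + 𝒜.card := Finset.card_union_le _ _
        _ ≤ r * (k - T) + (k - T) := by omega
        _ = (r + 1) * (k - T) := by ring
    · have hbi : (𝒮' ∪ 𝒜).biUnion id = 𝒮'.biUnion id ∪ 𝒜.biUnion id := by
        ext x; simp [Finset.mem_biUnion, or_and_right, exists_or]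
      have hset : U \ (𝒮' ∪ 𝒜).biUnion id = W \ 𝒜.biUnion id := by
        rw [hbi, hWdef]
        exact (sdiff_sdiff U (𝒮'.biUnion id) (𝒜.biUnion id)).symm
      rw [hset]
      have hk0 : (0 : ℝ) < (k : ℝ) := by
        have : 0 < k := by omega
        exact_mod_cast this
      have h1 : ((W \ 𝒜.biUnion id).card : ℝ) ≤ (T : ℝ) / (k : ℝ) * (W.card : ℝ) := by
        rw [div_mul_eq_mul_div, le_div_iff₀ hk0]
        have hnat : (W \ 𝒜.biUnion id).card * k ≤ T * W.card := by
          rw [Nat.mul_comm]; exact h𝒜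
        exact_mod_cast hnat
      have hTk0 : (0 : ℝ) ≤ (T : ℝ) / (k : ℝ) := by positivity
      calc ((W \ 𝒜.biUnion id).card : ℝ)
          ≤ (T : ℝ) / (k : ℝ) * (W.card : ℝ) := h1
        _ ≤ (T : ℝ) / (k : ℝ) * (((T : ℝ) / (k : ℝ)) ^ r * (U.card : ℝ)) :=
            mul_le_mul_of_nonneg_left hbound hTk0
        _ = ((T : ℝ) / (k : ℝ)) ^ (r + 1) * (U.card : ℝ) := by ring
end
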